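/- Let G be a finite nilpotent group. If for every prime p dividing |G| every Sylow p-subgroup of G is Abelian representable, then G is Abelian representable: for every n and every family of subgroups G₁, …, Gₙ of G there exist a finite abelian group A and subgroups A₁, …, Aₙ such that [G : ⋂_{i∈S} G_i] = [A : ⋂_{i∈S} A_i] for every nonempty S ⊆ {1, …, n}. -/

import Mathlib

/-- A group `G` is Abelian representable if for every `n` and every family of
subgroups `G₁, …, Gₙ` of `G` there are a finite abelian (additive) group `A` and
subgroups `A₁, …, Aₙ` of `A` such that `[G : ⋂_{i∈S} Gᵢ] = [A : ⋂_{i∈S} Aᵢ]` for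
every nonempty `S ⊆ {1,…,n}`. -/
def AbelianRepresentable (G : Type*) [Group G] : Prop :=
  ∀ (n : ℕ) (Gs : Fin n → Subgroup G),
    ∃ (A : Type) (_ : AddCommGroup A) (_ : Fintype A),
      ∃ As : Fin n → AddSubgroup A,
        ∀ S : Finset (Fin n), S.Nonempty →
          (⨅ i ∈ S, Gs i).index = (⨅ i ∈ S, As i).index

/-- Abelian representability transfers along group isomorphisms. -/
theorem abelianRepresentable_of_mulEquiv {G H : Type*} [Group G] [Group H] (e : G ≃* H)
    (hG : AbelianRepresentable G) : AbelianRepresentable H := by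
  intro n Gs
  obtain ⟨A, i1, i2, As, hA⟩ := hG n (fun i => (Gs i).comap e.toMonoidHom)
  refine ⟨A, i1, i2, As, fun S hS => ?_⟩
  rw [← hA S hS]
  have h : (⨅ i ∈ S, (Gs i).comap e.toMonoidHom) = (⨅ i ∈ S, Gs i).comap e.toMonoidHom := by
    simp [Subgroup.comap_iInf]
  rw [h, Subgroup.index_comap_of_surjective _ e.surjective]

/-- A subgroup of a product of finite groups of pairwise coprime orders is the
product of its projections. -/
theorem subgroup_pi_decomp {η : Type*} [Fintype η] (K : η → Type*) [∀ p, Group (K p)]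
    [∀ p, Finite (K p)]
    (hco : Pairwise fun p q => Nat.Coprime (Nat.card (K p)) (Nat.card (K q)))
    (Γ : Subgroup (∀ p, K p)) :
    Γ = Subgroup.pi Set.univ (fun p => Γ.map (Pi.evalMonoidHom K p)) := by
  classical
  apply le_antisymm
  · intro x hx
    rw [Subgroup.mem_pi]
    exact fun p _ => ⟨x, hx, rfl⟩
  · intro x hx
    rw [Subgroup.mem_pi] at hx
    have key : ∀ p, Pi.mulSingle p (x p) ∈ Γ := by
      intro p
      obtain ⟨y, hy, hyp⟩ := hx p (Set.mem_univ p)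
      set Np := ∏ q ∈ Finset.univ.erase p, Nat.card (K q) with hNp
      have hcop : Nat.Coprime (Nat.card (K p)) Np := by
        apply Nat.Coprime.prod_right
        intro q hq
        exact hco (fun h => (Finset.mem_erase.mp hq).1 h.symm)
      obtain ⟨k, hk1, hk0⟩ := Nat.chineseRemainder hcop 1 0
      have hyk : y ^ k = Pi.mulSingle p (x p) := by
        funext q
        rw [Pi.pow_apply]
        by_cases hq : q = p
        · subst hq
          rw [Pi.mulSingle_eq_same, ← hyp]
          have hd : orderOf (y q) ∣ Nat.card (K q) := orderOf_dvd_natCard _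
          have h1 : y q ^ k = y q ^ 1 := pow_eq_pow_iff_modEq.mpr (Nat.ModEq.of_dvd hd hk1)
          rw [h1, pow_one]
          rfl
        · rw [Pi.mulSingle_eq_of_ne hq]
          have hd : orderOf (y q) ∣ k := by
            refine dvd_trans (dvd_trans (orderOf_dvd_natCard _) ?_)
              ((Nat.modEq_zero_iff_dvd).mp hk0)
            exact Finset.dvd_prod_of_mem _ (Finset.mem_erase.mpr ⟨hq, Finset.mem_univ q⟩)
          exact orderOf_dvd_iff_pow_eq_one.mp hd
      exact hyk ▸ pow_mem hy k
    rw [← Finset.noncommProd_mulSingle x]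
    exact Subgroup.noncommProd_mem Γ _ (fun p _ => key p)

theorem iInf_subgroup_pi {η : Type*} {K : η → Type*} [∀ p, Group (K p)] {n : ℕ}
    (f : ∀ p, Fin n → Subgroup (K p)) (S : Finset (Fin n)) :
    (⨅ i ∈ S, Subgroup.pi Set.univ (fun p => f p i)) =
      Subgroup.pi Set.univ (fun p => ⨅ i ∈ S, f p i) := by
  ext x
  simp only [Subgroup.mem_iInf, Subgroup.mem_pi, Set.mem_univ, forall_true_left]
  tauto

theorem iInf_addSubgroup_pi {η : Type*} {K : η → Type*} [∀ p, AddGroup (K p)] {n : ℕ}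
    (f : ∀ p, Fin n → AddSubgroup (K p)) (S : Finset (Fin n)) :
    (⨅ i ∈ S, AddSubgroup.pi Set.univ (fun p => f p i)) =
      AddSubgroup.pi Set.univ (fun p => ⨅ i ∈ S, f p i) := by
  ext x
  simp only [AddSubgroup.mem_iInf, AddSubgroup.mem_pi, Set.mem_univ, forall_true_left]
  tauto

/-- Dependent version of `Subgroup.index_pi`. -/
theorem subgroup_index_pi' {η : Type*} [Fintype η] {K : η → Type*} [∀ p, Group (K p)]
    (H : ∀ p, Subgroup (K p)) :
    (Subgroup.pi Set.univ H).index = ∏ p, (H p).index := by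
  simp_rw [Subgroup.index, ← Nat.card_pi]
  refine Nat.card_congr
    ((Quotient.congrRight (fun x y ↦ ?_)).trans (Setoid.piQuotientEquiv _).symm)
  rw [QuotientGroup.leftRel_pi]

/-- Dependent version of `AddSubgroup.index_pi`. -/
theorem addSubgroup_index_pi' {η : Type*} [Fintype η] {K : η → Type*} [∀ p, AddGroup (K p)]
    (H : ∀ p, AddSubgroup (K p)) :
    (AddSubgroup.pi Set.univ H).index = ∏ p, (H p).index := by
  simp_rw [AddSubgroup.index, ← Nat.card_pi]
  refine Nat.card_congr
    ((Quotient.congrRight (fun x y ↦ ?_)).trans (Setoid.piQuotientEquiv _).symm)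
  rw [QuotientAddGroup.leftRel_pi]

/-- A product of finite groups of pairwise coprime orders, each of which is
Abelian representable, is Abelian representable. -/
theorem abelianRepresentable_pi {η : Type} [Fintype η] (K : η → Type*) [∀ p, Group (K p)]
    [∀ p, Finite (K p)]
    (hco : Pairwise fun p q => Nat.Coprime (Nat.card (K p)) (Nat.card (K q)))
    (hrep : ∀ p, AbelianRepresentable (K p)) :
    AbelianRepresentable (∀ p, K p) := by
  classical
  intro n Gs
  choose A iA fA As hA using fun p => hrep p n (fun i => (Gs i).map (Pi.evalMonoidHom K p))
  letI : ∀ p, AddCommGroup (A p) := iA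
  letI : ∀ p, Fintype (A p) := fA
  refine ⟨∀ p, A p, inferInstance, inferInstance,
    fun i => AddSubgroup.pi Set.univ (fun p => As p i), fun S hS => ?_⟩
  have e1 : (⨅ i ∈ S, Gs i)
      = Subgroup.pi Set.univ fun p => ⨅ i ∈ S, (Gs i).map (Pi.evalMonoidHom K p) := by
    rw [← iInf_subgroup_pi]
    exact iInf_congr fun i => iInf_congr fun _ => subgroup_pi_decomp K hco (Gs i)
  have e2 : (⨅ i ∈ S, AddSubgroup.pi Set.univ fun p => As p i)
      = AddSubgroup.pi Set.univ fun p => ⨅ i ∈ S, As p i := iInf_addSubgroup_pi _ S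
  rw [e1, e2, subgroup_index_pi', addSubgroup_index_pi']
  exact Finset.prod_congr rfl fun p _ => hA p S hS

/-- If every Sylow `p`-subgroup (for every prime `p` dividing `|G|`)
of a finite nilpotent group `G` is Abelian representable, then `G` is Abelian
representable. -/
theorem nilpotent_abelianRepresentable_of_sylow
    (G : Type*) [Group G] [Finite G] [Group.IsNilpotent G]
    (hSyl : ∀ p : ℕ, p.Prime → p ∣ Nat.card G →
      ∀ P : Sylow p G, AbelianRepresentable (P : Subgroup G)) :
    AbelianRepresentable G := by
  classical
  have hn : ∀ {p : ℕ} [Fact p.Prime] (P : Sylow p G), (↑P : Subgroup G).Normal := by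
    have h := (isNilpotent_of_finite_tfae (G := G)).out 0 3
    intro p hp P
    exact h.mp inferInstance p hp P
  refine abelianRepresentable_of_mulEquiv (Sylow.directProductOfNormal hn) ?_
  apply abelianRepresentable_pi
  · intro pp qq hne
    haveI := Fact.mk (Nat.prime_of_mem_primeFactors pp.2)
    haveI := Fact.mk (Nat.prime_of_mem_primeFactors qq.2)
    have hne' : (pp : ℕ) ≠ (qq : ℕ) := Subtype.coe_injective.ne hne
    letI := Sylow.unique_of_normal (default : Sylow (pp : ℕ) G) (hn default)
    letI := Sylow.unique_of_normal (default : Sylow (qq : ℕ) G) (hn default)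
    have h1 : Nat.card (∀ P : Sylow (pp : ℕ) G, P)
        = Nat.card ((default : Sylow (pp : ℕ) G) : Subgroup G) :=
      Nat.card_congr (MulEquiv.piUnique _).toEquiv
    have h2 : Nat.card (∀ P : Sylow (qq : ℕ) G, P)
        = Nat.card ((default : Sylow (qq : ℕ) G) : Subgroup G) :=
      Nat.card_congr (MulEquiv.piUnique _).toEquiv
    rw [h1, h2]
    exact IsPGroup.coprime_card_of_ne (pp : ℕ) (qq : ℕ) hne' _ _
      (default : Sylow (pp : ℕ) G).isPGroup' (default : Sylow (qq : ℕ) G).isPGroup'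
  · intro pp
    haveI := Fact.mk (Nat.prime_of_mem_primeFactors pp.2)
    letI := Sylow.unique_of_normal (default : Sylow (pp : ℕ) G) (hn default)
    exact abelianRepresentable_of_mulEquiv
      (MulEquiv.piUnique (fun P : Sylow (pp : ℕ) G => P)).symm
      (hSyl pp (Nat.prime_of_mem_primeFactors pp.2) (Nat.dvd_of_mem_primeFactors pp.2) default)
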